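/- Let σ_1, σ_2 be permutations of [n] and let γ = (1/2)(P_{σ_1} + P_{σ_2}). Then C_2(γ) = 2^{c(σ_1,σ_2)}, where C_2(γ) is the number of ordered pairs (σ'_1, σ'_2) of permutations with (1/2)(P_{σ'_1} + P_{σ'_2}) = γ, and c(σ_1,σ_2) is the number of cycles of length greater than one of the permutation σ_1 ∘ σ_2^{-1}. -/

import Mathlib

open scoped BigOperators

/-- The permanent of an `n × n` real matrix. -/
noncomputable def perm {n : ℕ} (γ : Matrix (Fin n) (Fin n) ℝ) : ℝ :=
  ∑ σ : Equiv.Perm (Fin n), ∏ i, γ i (σ i)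

/-- Doubly stochastic: non-negative entries, row sums and column sums equal 1. -/
def IsDoublyStochastic {n : ℕ} (γ : Matrix (Fin n) (Fin n) ℝ) : Prop :=
  (∀ i j, 0 ≤ γ i j) ∧ (∀ i, ∑ j, γ i j = 1) ∧ (∀ j, ∑ i, γ i j = 1)

/-- The permutation matrix associated with `σ`. -/
def Pmat {n : ℕ} (σ : Equiv.Perm (Fin n)) : Matrix (Fin n) (Fin n) ℝ :=
  fun i j => if σ i = j then 1 else 0

/-- `γ ∈ Γ_{M,n}`: doubly stochastic with all entries integer multiples of `1/M`. -/
def MemGamma {n : ℕ} (M : ℕ) (γ : Matrix (Fin n) (Fin n) ℝ) : Prop :=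
  IsDoublyStochastic γ ∧ ∀ i j, ∃ k : ℕ, γ i j = (k : ℝ) / M

/-- `C_M(γ)`: the number of `M`-tuples of permutations whose permutation matrices
average to `γ`. -/
noncomputable def CM {n : ℕ} (M : ℕ) (γ : Matrix (Fin n) (Fin n) ℝ) : ℕ :=
  Nat.card {σs : Fin M → Equiv.Perm (Fin n) // γ = (M : ℝ)⁻¹ • ∑ m, Pmat (σs m)}

/-- `θ^{M·γ} = ∏_{i,j} θ(i,j)^{M·γ(i,j)}` (the exponents are natural numbers for
`γ ∈ Γ_{M,n}`). -/
noncomputable def matPow {n : ℕ} (M : ℕ) (θ γ : Matrix (Fin n) (Fin n) ℝ) : ℝ :=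
  ∏ i, ∏ j, θ i j ^ (⌊(M : ℝ) * γ i j⌋₊)

theorem Equiv.Perm.apply_inv_self {α : Type*} (f : Equiv.Perm α) (x : α) : f (f⁻¹ x) = x :=
  (Equiv.eq_symm_apply f).mp rfl

theorem Equiv.Perm.inv_apply_self {α : Type*} (f : Equiv.Perm α) (x : α) : f⁻¹ (f x) = x :=
  Equiv.Perm.inv_eq_iff_eq.mpr rfl

section Aux

open Equiv Equiv.Perm Finset

variable {α : Type*} [Fintype α] [DecidableEq α]

private lemma commAux {ρ : Perm α} {S : Finset (Perm α)} (hS : S ⊆ ρ.cycleFactorsFinset) :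
    (S : Set (Perm α)).Pairwise fun a b => Commute (id a) (id b) :=
  fun a ha b hb hab =>
    ((cycleFactorsFinset_pairwise_disjoint ρ) (hS ha) (hS hb) hab).commute

private lemma disjAux {ρ : Perm α} {S : Finset (Perm α)} (hS : S ⊆ ρ.cycleFactorsFinset) :
    (S : Set (Perm α)).Pairwise fun a b => Disjoint (id a) (id b) :=
  fun a ha b hb hab => (cycleFactorsFinset_pairwise_disjoint ρ) (hS ha) (hS hb) hab

private lemma eval_fix {ρ : Perm α} {S : Finset (Perm α)} (hS : S ⊆ ρ.cycleFactorsFinset)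
    {a : α} (ha : ∀ c ∈ S, a ∉ c.support) :
    S.noncommProd id (commAux hS) a = a := by
  apply Equiv.Perm.notMem_support.mp
  rw [Equiv.Perm.support_noncommProd (disjAux hS)]
  simp only [Finset.mem_biUnion, not_exists, not_and]
  intro c hc
  exact ha c hc

private lemma eval_mem {ρ : Perm α} {S : Finset (Perm α)} (hS : S ⊆ ρ.cycleFactorsFinset)
    {c : Perm α} (hc : c ∈ S) {a : α} (ha : a ∈ c.support) :
    S.noncommProd id (commAux hS) a = c a := by
  rw [← Finset.noncommProd_erase_mul S hc id (commAux hS)]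
  have h1 : ∀ d ∈ S.erase c, c a ∉ d.support := by
    intro d hd hmem
    have hca : c a ∈ c.support := Equiv.Perm.apply_mem_support.mpr ha
    have : d = c :=
      (Equiv.Perm.cycle_is_cycleOf hmem (hS (Finset.mem_of_mem_erase hd))).trans
        (Equiv.Perm.cycle_is_cycleOf hca (hS hc)).symm
    exact Finset.ne_of_mem_erase hd this
  have h2 := eval_fix (Finset.Subset.trans (Finset.erase_subset c S) hS) h1
  exact h2

private lemma constancy {ρ g : Perm α} (hg : ∀ i, g i = ρ i ∨ g i = i)
    {a : α} (ha : g a = ρ a) (ha' : a ∈ ρ.support) (k : ℕ) :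
    g ((ρ ^ k) a) = ρ ((ρ ^ k) a) := by
  induction k with
  | zero => simpa using ha
  | succ k ih =>
    have hbs : (ρ ^ k) a ∈ ρ.support := (Equiv.Perm.pow_apply_mem_support).mpr ha'
    have hstep : (ρ ^ (k + 1)) a = ρ ((ρ ^ k) a) := by
      rw [pow_succ']; rfl
    rcases hg (ρ ((ρ ^ k) a)) with h | h
    · rw [hstep]; exact h
    · exfalso
      have : g (ρ ((ρ ^ k) a)) = g ((ρ ^ k) a) := by rw [h, ih]
      have := g.injective this
      exact (Equiv.Perm.mem_support.mp hbs) this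

private lemma sameCycleAgree {ρ g : Perm α} (hg : ∀ i, g i = ρ i ∨ g i = i)
    {a b : α} (ha : g a = ρ a) (ha' : a ∈ ρ.support) (h : ρ.SameCycle a b) :
    g b = ρ b := by
  obtain ⟨k, _, rfl⟩ := h.exists_pow_eq'
  exact constancy hg ha ha' k

/-- If `g` agrees pointwise with `ρ` or the identity and moves `i`,
then `g⁻¹ i = ρ⁻¹ i`. -/
private lemma inv_pt {ρ g : Perm α} (hg : ∀ i, g i = ρ i ∨ g i = i) {i : α}
    (h1 : g i = ρ i) (h2 : ρ i ≠ i) : g⁻¹ i = ρ⁻¹ i := by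
  rcases hg (g⁻¹ i) with h | h
  · rw [Equiv.Perm.apply_inv_self] at h
    exact Equiv.Perm.eq_inv_iff_eq.mpr h.symm
  · rw [Equiv.Perm.apply_inv_self] at h
    exfalso
    apply h2
    rw [← h1]
    conv_lhs => rw [h]
    exact Equiv.Perm.apply_inv_self g i

private lemma card_D (ρ : Perm α) :
    Nat.card {g : Perm α // ∀ i, g i = ρ i ∨ g i = i} = 2 ^ ρ.cycleType.card := by
  have e : {g : Perm α // ∀ i, g i = ρ i ∨ g i = i} ≃
      {S : Finset (Perm α) // S ⊆ ρ.cycleFactorsFinset} := by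
    refine
      { toFun := fun g => ⟨ρ.cycleFactorsFinset.filter
          (fun c => ∀ a ∈ c.support, g.1 a = ρ a), Finset.filter_subset _ _⟩
        invFun := fun S => ⟨S.1.noncommProd id (commAux S.2), ?_⟩
        left_inv := ?_
        right_inv := ?_ }
    · intro a
      by_cases h : ∃ c ∈ S.1, a ∈ c.support
      · obtain ⟨c, hc, hac⟩ := h
        left
        rw [eval_mem S.2 hc hac]
        exact (Equiv.Perm.mem_cycleFactorsFinset_iff.mp (S.2 hc)).2 a hac
      · right
        push_neg at h
        exact eval_fix S.2 h
    · rintro ⟨g, hg⟩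
      apply Subtype.ext
      apply Equiv.ext
      intro a
      by_cases hsup : a ∈ ρ.support
      · have hcf : ρ.cycleOf a ∈ ρ.cycleFactorsFinset :=
          Equiv.Perm.cycleOf_mem_cycleFactorsFinset_iff.mpr hsup
        have hac : a ∈ (ρ.cycleOf a).support :=
          Equiv.Perm.mem_support_cycleOf_iff.mpr ⟨Equiv.Perm.SameCycle.refl _ _, hsup⟩
        by_cases hga : g a = ρ a
        · have hmem : ρ.cycleOf a ∈ ρ.cycleFactorsFinset.filter
              (fun c => ∀ b ∈ c.support, g b = ρ b) := by
            rw [Finset.mem_filter]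
            refine ⟨hcf, fun b hb => ?_⟩
            exact sameCycleAgree hg hga hsup (Equiv.Perm.mem_support_cycleOf_iff.mp hb).1
          rw [eval_mem (Finset.filter_subset _ _) hmem hac,
            Equiv.Perm.cycleOf_apply_self, hga]
        · have hga' : g a = a := (hg a).resolve_left hga
          have hfix : ∀ c ∈ ρ.cycleFactorsFinset.filter
              (fun c => ∀ b ∈ c.support, g b = ρ b), a ∉ c.support := by
            intro c hc hac'
            rw [Finset.mem_filter] at hc
            exact hga (hc.2 a hac')
          rw [eval_fix (Finset.filter_subset _ _) hfix, hga']
      · have hga : g a = a := by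
          rcases hg a with h | h
          · rw [h]; exact Equiv.Perm.notMem_support.mp hsup
          · exact h
        have hfix : ∀ c ∈ ρ.cycleFactorsFinset.filter
            (fun c => ∀ b ∈ c.support, g b = ρ b), a ∉ c.support := by
          intro c hc hac'
          exact hsup (Equiv.Perm.mem_cycleFactorsFinset_support_le
            (Finset.mem_filter.mp hc).1 hac')
        rw [eval_fix (Finset.filter_subset _ _) hfix, hga]
    · rintro ⟨S, hS⟩
      apply Subtype.ext
      simp only
      ext c
      rw [Finset.mem_filter]
      constructor
      · rintro ⟨hcf, hall⟩
        have hcyc : c.IsCycle := (Equiv.Perm.mem_cycleFactorsFinset_iff.mp hcf).1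
        obtain ⟨a, ha⟩ := hcyc.nonempty_support
        have h1 : S.noncommProd id (commAux hS) a = ρ a := hall a ha
        have h2 : ρ a ≠ a := by
          rw [← (Equiv.Perm.mem_cycleFactorsFinset_iff.mp hcf).2 a ha]
          exact Equiv.Perm.mem_support.mp ha
        have h3 : a ∈ (S.noncommProd id (commAux hS)).support := by
          rw [Equiv.Perm.mem_support, h1]; exact h2
        rw [Equiv.Perm.support_noncommProd (disjAux hS), Finset.mem_biUnion] at h3
        obtain ⟨d, hd, had⟩ := h3
        simp only [id_eq] at had
        have : d = c :=
          (Equiv.Perm.cycle_is_cycleOf (f := ρ) had (hS hd)).trans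
            (Equiv.Perm.cycle_is_cycleOf ha hcf).symm
        rwa [this] at hd
      · intro hcS
        refine ⟨hS hcS, fun a ha => ?_⟩
        rw [eval_mem hS hcS ha]
        exact (Equiv.Perm.mem_cycleFactorsFinset_iff.mp (hS hcS)).2 a ha
  rw [Nat.card_congr e]
  have e2 : {S : Finset (Perm α) // S ⊆ ρ.cycleFactorsFinset} ≃
      {S : Finset (Perm α) // S ∈ ρ.cycleFactorsFinset.powerset} :=
    Equiv.subtypeEquivRight (fun S => (Finset.mem_powerset).symm)
  rw [Nat.card_congr e2, Nat.card_eq_fintype_card, Fintype.card_coe,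
    Finset.card_powerset, Equiv.Perm.cycleType_def, Multiset.card_map]
  rfl

private lemma row_lemma {β : Type*} [DecidableEq β] {a b c d : β}
    (h : ∀ j : β, (if a = j then (1:ℝ) else 0) + (if b = j then 1 else 0)
            = (if c = j then 1 else 0) + (if d = j then 1 else 0)) :
    (c = a ∧ d = b) ∨ (c = b ∧ d = a) := by
  by_cases hca : c = a
  · by_cases hdb : d = b
    · exact Or.inl ⟨hca, hdb⟩
    · exfalso
      have h2 := h b
      rw [hca] at h2
      split_ifs at h2 <;> simp_all
  · have h1 := h a
    by_cases hba : b = a <;> by_cases hda : d = a <;>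
      simp only [if_pos rfl, if_pos, if_neg, hca, hba, hda, not_false_iff] at h1 <;>
      try norm_num at h1
    · have h2 := h b
      by_cases hcb : c = b
      · exact Or.inr ⟨hcb, hda⟩
      · exfalso
        rw [hda] at h2
        split_ifs at h2 <;> simp_all

private lemma row_lemma' {β : Type*} [DecidableEq β] {a b c d : β}
    (hcd : (c = a ∧ d = b) ∨ (c = b ∧ d = a)) (j : β) :
    (if a = j then (1:ℝ) else 0) + (if b = j then 1 else 0)
      = (if c = j then 1 else 0) + (if d = j then 1 else 0) := by
  rcases hcd with ⟨rfl, rfl⟩ | ⟨rfl, rfl⟩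
  · rfl
  · exact add_comm _ _

private lemma pair_char {n : ℕ} (σ₁ σ₂ : Equiv.Perm (Fin n)) (σs : Fin 2 → Equiv.Perm (Fin n)) :
    ((2 : ℝ)⁻¹ • (Pmat σ₁ + Pmat σ₂) = ((2:ℕ) : ℝ)⁻¹ • ∑ m, Pmat (σs m)) ↔
      ∀ i, (σs 0 i = σ₁ i ∧ σs 1 i = σ₂ i) ∨ (σs 0 i = σ₂ i ∧ σs 1 i = σ₁ i) := by
  have h2 : ((2:ℕ) : ℝ) = (2 : ℝ) := by norm_num
  rw [h2, Fin.sum_univ_two]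
  constructor
  · intro h i
    have h' : Pmat σ₁ + Pmat σ₂ = Pmat (σs 0) + Pmat (σs 1) :=
      smul_right_injective (Matrix (Fin n) (Fin n) ℝ) (by norm_num : (2:ℝ)⁻¹ ≠ 0) h
    apply row_lemma
    intro j
    have := congrFun (congrFun h' i) j
    simpa [Pmat, Matrix.add_apply] using this
  · intro h
    congr 1
    ext i j
    simp only [Matrix.add_apply, Pmat]
    exact row_lemma' (h i) j

end Aux

theorem CM_two_eq_two_pow_cycles {n : ℕ} (σ₁ σ₂ : Equiv.Perm (Fin n)) :
    CM 2 ((2 : ℝ)⁻¹ • (Pmat σ₁ + Pmat σ₂))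
      = 2 ^ (σ₁ * σ₂⁻¹).cycleType.card := by
  set ρ : Equiv.Perm (Fin n) := σ₂⁻¹ * σ₁ with hρ
  have hρ_apply : ∀ x, ρ x = σ₂⁻¹ (σ₁ x) := fun x => rfl
  have e : {σs : Fin 2 → Equiv.Perm (Fin n) //
      (2 : ℝ)⁻¹ • (Pmat σ₁ + Pmat σ₂) = ((2:ℕ) : ℝ)⁻¹ • ∑ m, Pmat (σs m)} ≃
      {g : Equiv.Perm (Fin n) // ∀ i, g i = ρ i ∨ g i = i} := by
    have memD : ∀ (σs : Fin 2 → Equiv.Perm (Fin n)),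
        (∀ i, (σs 0 i = σ₁ i ∧ σs 1 i = σ₂ i) ∨ (σs 0 i = σ₂ i ∧ σs 1 i = σ₁ i)) →
        ∀ i, (σ₂⁻¹ * σs 0) i = ρ i ∨ (σ₂⁻¹ * σs 0) i = i := by
      intro σs h i
      rcases h i with ⟨h0, _⟩ | ⟨h0, _⟩
      · left; simp [Equiv.Perm.mul_apply, h0, hρ_apply]
      · right; simp [Equiv.Perm.mul_apply, h0]
    refine
      { toFun := fun σs => ⟨σ₂⁻¹ * σs.1 0, memD σs.1 ((pair_char σ₁ σ₂ σs.1).mp σs.2)⟩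
        invFun := fun g => ⟨![σ₂ * g.1, σ₁ * g.1⁻¹], (pair_char σ₁ σ₂ _).mpr ?_⟩
        left_inv := ?_
        right_inv := ?_ }
    · intro i
      simp only [Matrix.cons_val_zero, Matrix.cons_val_one, Matrix.head_cons,
        Equiv.Perm.mul_apply]
      rcases g.2 i with h | h
      · by_cases hfix : ρ i = i
        · right
          constructor
          · rw [h, hfix]
          · have : g.1 i = i := by rw [h, hfix]
            rw [Equiv.Perm.inv_eq_iff_eq.mpr this.symm]
        · left
          constructor
          · rw [h, hρ_apply, Equiv.Perm.apply_inv_self]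
          · rw [inv_pt g.2 h hfix, hρ, mul_inv_rev, inv_inv,
              Equiv.Perm.mul_apply, Equiv.Perm.apply_inv_self]
      · right
        constructor
        · rw [h]
        · rw [Equiv.Perm.inv_eq_iff_eq.mpr h.symm]
    · rintro ⟨σs, hσs⟩
      have hchar := (pair_char σ₁ σ₂ σs).mp hσs
      apply Subtype.ext
      simp only
      funext m
      set g : Equiv.Perm (Fin n) := σ₂⁻¹ * σs 0 with hg
      have hgD : ∀ i, g i = ρ i ∨ g i = i := memD σs hchar
      fin_cases m
      · show σ₂ * (σ₂⁻¹ * σs 0) = σs 0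
        group
      · show σ₁ * (σ₂⁻¹ * σs 0)⁻¹ = σs 1
        apply Equiv.ext
        intro x
        simp only [Equiv.Perm.mul_apply]
        rcases hchar x with ⟨h0, h1⟩ | ⟨h0, h1⟩
        · have hgx : g x = ρ x := by
            rw [hg, Equiv.Perm.mul_apply, h0, hρ_apply]
          by_cases hfix : ρ x = x
          · have hgx' : g x = x := by rw [hgx, hfix]
            rw [Equiv.Perm.inv_eq_iff_eq.mpr hgx'.symm, h1]
            have hax := hρ_apply x
            rw [hfix] at hax
            exact ((σ₂.eq_symm_apply).mp hax).symm
          · rw [inv_pt hgD hgx hfix, h1, hρ, mul_inv_rev, inv_inv,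
              Equiv.Perm.mul_apply, Equiv.Perm.apply_inv_self]
        · have hgx : g x = x := by
            rw [hg, Equiv.Perm.mul_apply, h0, Equiv.Perm.inv_apply_self]
          rw [Equiv.Perm.inv_eq_iff_eq.mpr hgx.symm, h1]
    · rintro ⟨g, hgD⟩
      apply Subtype.ext
      show σ₂⁻¹ * (σ₂ * g) = g
      group
  have hCM : CM 2 ((2 : ℝ)⁻¹ • (Pmat σ₁ + Pmat σ₂)) = Nat.card
      {σs : Fin 2 → Equiv.Perm (Fin n) //
        (2 : ℝ)⁻¹ • (Pmat σ₁ + Pmat σ₂) = ((2:ℕ) : ℝ)⁻¹ • ∑ m, Pmat (σs m)} := rfl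
  rw [hCM, Nat.card_congr e, card_D]
  congr 1
  have : σ₁ * σ₂⁻¹ = σ₂ * ρ * σ₂⁻¹ := by rw [hρ]; group
  rw [this, Equiv.Perm.cycleType_conj]
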